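/- arXiv:2004.03105 — 7 statements merged into one kernel-verified Lean document; each statement's English description precedes it below -/
import Mathlib

section
/- If Y is a complex symmetric matrix and Y = U Y₀ Uᵀ is an Autonne–Takagi decomposition with U unitary and Y₀ real non-negative diagonal, and V is another unitary with Y = V Y₀ Vᵀ, then V = U Q where Q is block diagonal: Q = Q₁ ⊕ … ⊕ Q_d ⊕ W, each Q_j a real orthogonal n_j×n_j matrix (n_j the multiplicity of the j-th distinct positive singular value) and W an (n−r)×(n−r) unitary matrix, r = rank Y. -/
open Matrix in
/-- Uniqueness of the Autonne–Takagi decomposition (block form).  If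
`Y = U Y₀ Uᵀ = V Y₀ Vᵀ` with `U, V` unitary and `Y₀ = diagonal σ` real
non-negative diagonal, then `V = U * Q` where `Q` is unitary, block diagonal
with respect to the blocks of equal singular values (`Q j k = 0` whenever
`σ j ≠ σ k`), the blocks corresponding to the distinct positive singular
values are real (hence real orthogonal), and the block corresponding to the
zero singular values is an arbitrary unitary. -/
theorem autonne_takagi_uniqueness_blocks {n : ℕ}
    (Y U V : Matrix (Fin n) (Fin n) ℂ) (σ : Fin n → ℝ)
    (hYsymm : Yᵀ = Y)
    (hσ : ∀ j, 0 ≤ σ j)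
    (hU : U ∈ Matrix.unitaryGroup (Fin n) ℂ)
    (hV : V ∈ Matrix.unitaryGroup (Fin n) ℂ)
    (hYU : Y = U * Matrix.diagonal (fun j => (σ j : ℂ)) * Uᵀ)
    (hYV : Y = V * Matrix.diagonal (fun j => (σ j : ℂ)) * Vᵀ) :
    ∃ Q : Matrix (Fin n) (Fin n) ℂ,
      Q ∈ Matrix.unitaryGroup (Fin n) ℂ ∧
      (∀ j k, σ j ≠ σ k → Q j k = 0) ∧
      (∀ j k, σ j = σ k → σ j ≠ 0 → (Q j k).im = 0) ∧
      V = U * Q := by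
  set D : Matrix (Fin n) (Fin n) ℂ := Matrix.diagonal (fun j => (σ j : ℂ)) with hD
  set Q : Matrix (Fin n) (Fin n) ℂ := star U * V with hQdef
  have hUs : star U * U = 1 := Matrix.mem_unitaryGroup_iff'.mp hU
  have hQ : Q ∈ Matrix.unitaryGroup (Fin n) ℂ :=
    mul_mem (Unitary.star_mem hU) hV
  have hQs : star Q * Q = 1 := Matrix.mem_unitaryGroup_iff'.mp hQ
  -- key identity: Q * D * Qᵀ = D
  have hkey : Q * D * Qᵀ = D := by
    have h1 : Qᵀ = Vᵀ * (star U)ᵀ := by rw [hQdef, Matrix.transpose_mul]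
    calc Q * D * Qᵀ = star U * (V * D * Vᵀ) * (star U)ᵀ := by
          rw [h1, hQdef]; simp only [mul_assoc]
      _ = star U * (U * D * Uᵀ) * (star U)ᵀ := by rw [← hYV, ← hYU]
      _ = (star U * U) * D * (star U * U)ᵀ := by
          rw [Matrix.transpose_mul]; simp only [mul_assoc]
      _ = D := by rw [hUs, Matrix.transpose_one, one_mul, mul_one]
  -- from this: Q * D = D * (star Q)ᵀ
  have hQD : Q * D = D * (star Q)ᵀ := by
    have h2 : Qᵀ * (star Q)ᵀ = 1 := by
      rw [← Matrix.transpose_mul, hQs, Matrix.transpose_one]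
    calc Q * D = Q * D * (Qᵀ * (star Q)ᵀ) := by rw [h2, mul_one]
      _ = (Q * D * Qᵀ) * (star Q)ᵀ := by simp only [mul_assoc]
      _ = D * (star Q)ᵀ := by rw [hkey]
  -- entrywise identity
  have hent : ∀ j k, Q j k * (σ k : ℂ) = (σ j : ℂ) * (starRingEnd ℂ) (Q j k) := by
    intro j k
    have := congrFun (congrFun hQD j) k
    simp only [hD, Matrix.mul_diagonal, Matrix.diagonal_mul, Matrix.transpose_apply,
      Matrix.conjTranspose_apply] at this
    exact this
  refine ⟨Q, hQ, ?_, ?_, ?_⟩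
  · intro j k hjk
    have h := hent j k
    have habs : ‖Q j k‖ * σ k = σ j * ‖Q j k‖ := by
      have := congrArg (‖·‖) h
      simpa [_root_.map_mul, Complex.norm_real, Real.norm_eq_abs, abs_of_nonneg (hσ j),
        abs_of_nonneg (hσ k), Complex.norm_conj] using this
    by_contra hne
    have habs' : ‖Q j k‖ ≠ 0 := by
      simpa [norm_eq_zero] using hne
    apply hjk
    have : ‖Q j k‖ * σ k = ‖Q j k‖ * σ j := by
      linarith [habs]
    exact (mul_left_cancel₀ habs' this).symm
  · intro j k hjk hj0
    have h := hent j k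
    rw [← hjk] at h
    have hj0' : (σ j : ℂ) ≠ 0 := by exact_mod_cast hj0
    have : Q j k = (starRingEnd ℂ) (Q j k) := by
      exact mul_left_cancel₀ hj0' (by rw [mul_comm]; exact h)
    exact Complex.conj_eq_iff_im.mp this.symm
  · rw [hQdef, ← mul_assoc, Matrix.mem_unitaryGroup_iff.mp hU, one_mul]
end

section
/- If Y is a complex symmetric n×n matrix with distinct singular values, and U, V are unitaries giving Autonne–Takagi decompositions Y = U Y₀ Uᵀ = V Y₀ Vᵀ with Y₀ the diagonal matrix of singular values, then V = U D where D is diagonal with entries ±1, except that when Y is singular the last diagonal entry (corresponding to the zero singular value) may be an arbitrary unit complex number e^{iθ}. -/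
open Matrix in
/-- Uniqueness of the Autonne–Takagi decomposition for distinct singular values:
if `Y = U Y₀ Uᵀ = V Y₀ Vᵀ` with `Y₀ = diagonal σ`, the `σ j` non-negative and
pairwise distinct, then `V = U * D` with `D` diagonal, `D j j = ±1` at every
index with `σ j ≠ 0`, and `|D j j| = 1` (an arbitrary phase `e^{iθ}`) at an
index with `σ j = 0`. -/
theorem autonne_takagi_uniqueness_distinct {n : ℕ}
    (Y U V : Matrix (Fin n) (Fin n) ℂ) (σ : Fin n → ℝ)
    (hYsymm : Yᵀ = Y)
    (hσ : ∀ j, 0 ≤ σ j)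
    (hdistinct : Function.Injective σ)
    (hU : U ∈ Matrix.unitaryGroup (Fin n) ℂ)
    (hV : V ∈ Matrix.unitaryGroup (Fin n) ℂ)
    (hYU : Y = U * Matrix.diagonal (fun j => (σ j : ℂ)) * Uᵀ)
    (hYV : Y = V * Matrix.diagonal (fun j => (σ j : ℂ)) * Vᵀ) :
    ∃ d : Fin n → ℂ,
      (∀ j, σ j ≠ 0 → d j = 1 ∨ d j = -1) ∧
      (∀ j, ‖d j‖ = 1) ∧
      V = U * Matrix.diagonal d := by
  classical
  set D : Matrix (Fin n) (Fin n) ℂ := Matrix.diagonal (fun j => (σ j : ℂ)) with hD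
  have hU1 : star U * U = 1 := hU.1
  have hU2 : U * star U = 1 := hU.2
  set W : Matrix (Fin n) (Fin n) ℂ := star U * V with hWdef
  have hWmem : W ∈ Matrix.unitaryGroup (Fin n) ℂ := mul_mem (Unitary.star_mem hU) hV
  have hW1 : star W * W = 1 := hWmem.1
  have hW2 : W * star W = 1 := hWmem.2
  have hVW : V = U * W := by
    rw [hWdef, ← mul_assoc, hU2, one_mul]
  have hDstar : star D = D := by
    rw [hD, Matrix.star_eq_conjTranspose, Matrix.diagonal_conjTranspose]
    have : (star fun j => (σ j : ℂ)) = fun j => (σ j : ℂ) := by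
      funext j
      exact Complex.conj_ofReal _
    rw [this]
  have key : U * D * Uᵀ = V * D * Vᵀ := hYU.symm.trans hYV
  have hUT : Uᵀ * (star U)ᵀ = 1 := by
    rw [← Matrix.transpose_mul, hU1, Matrix.transpose_one]
  have hWDW : W * D * Wᵀ = D := by
    calc W * D * Wᵀ = star U * (V * D * Vᵀ) * (star U)ᵀ := by
          rw [hWdef, Matrix.transpose_mul]; noncomm_ring
      _ = star U * (U * D * Uᵀ) * (star U)ᵀ := by rw [← key]
      _ = (star U * U) * (D * (Uᵀ * (star U)ᵀ)) := by noncomm_ring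
      _ = D := by rw [hU1, hUT, one_mul, mul_one]
  have hTT : (Wᵀ)ᴴ = (Wᴴ)ᵀ := by
    ext i j; simp [Matrix.conjTranspose_apply]
  have hWT : Wᵀ * (Wᵀ)ᴴ = 1 := by
    rw [hTT, ← Matrix.transpose_mul, ← Matrix.star_eq_conjTranspose, hW1, Matrix.transpose_one]
  have hDD : W * (D * D) * star W = D * D := by
    have e1 : star (W * D * Wᵀ) = (Wᵀ)ᴴ * (D * star W) := by
      rw [Matrix.star_mul, Matrix.star_mul, hDstar, Matrix.star_eq_conjTranspose Wᵀ]
    calc W * (D * D) * star W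
        = W * D * (1 : Matrix (Fin n) (Fin n) ℂ) * (D * star W) := by noncomm_ring
      _ = W * D * (Wᵀ * (Wᵀ)ᴴ) * (D * star W) := by rw [hWT]
      _ = (W * D * Wᵀ) * ((Wᵀ)ᴴ * (D * star W)) := by noncomm_ring
      _ = (W * D * Wᵀ) * star (W * D * Wᵀ) := by rw [e1]
      _ = D * D := by rw [hWDW, hDstar]
  have hcomm : W * (D * D) = (D * D) * W := by
    calc W * (D * D) = W * (D * D) * (star W * W) := by rw [hW1, mul_one]
      _ = (W * (D * D) * star W) * W := by noncomm_ring
      _ = (D * D) * W := by rw [hDD]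
  have hoff : ∀ i j, i ≠ j → W i j = 0 := by
    intro i j hij
    have h1 := congrFun (congrFun hcomm i) j
    rw [hD, Matrix.diagonal_mul_diagonal] at h1
    simp only [Matrix.mul_diagonal, Matrix.diagonal_mul] at h1
    by_contra h
    have h2 : (σ j : ℂ) * σ j = (σ i : ℂ) * σ i := by
      have := mul_left_cancel₀ h (by rw [h1]; ring : W i j * ((σ j : ℂ) * σ j) = W i j * ((σ i : ℂ) * σ i))
      exact this
    have h3 : σ j * σ j = σ i * σ i := by exact_mod_cast h2
    have h4 : σ j = σ i := by
      nlinarith [hσ i, hσ j]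
    exact hij (hdistinct h4).symm
  set d : Fin n → ℂ := fun j => W j j with hd
  have hWdiag : W = Matrix.diagonal d := by
    ext i j
    by_cases hij : i = j
    · subst hij; simp [hd]
    · rw [Matrix.diagonal_apply_ne _ hij]; exact hoff i j hij
  have habs : ∀ j, ‖d j‖ = 1 := by
    intro j
    have h1 := congrFun (congrFun hW2 j) j
    rw [hWdiag, Matrix.star_eq_conjTranspose, Matrix.diagonal_conjTranspose,
      Matrix.diagonal_mul_diagonal] at h1
    simp only [Matrix.diagonal_apply_eq, Matrix.one_apply_eq, Pi.star_apply] at h1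
    have h1' : d j * (starRingEnd ℂ) (d j) = 1 := h1
    rw [Complex.mul_conj] at h1'
    have h2 : Complex.normSq (d j) = 1 := by exact_mod_cast h1'
    rw [Complex.norm_def, h2, Real.sqrt_one]
  refine ⟨d, ?_, habs, by rw [hVW, hWdiag]⟩
  intro j hσj
  have h1 := congrFun (congrFun hWDW j) j
  rw [hWdiag, Matrix.diagonal_transpose, hD, Matrix.diagonal_mul_diagonal,
    Matrix.diagonal_mul_diagonal] at h1
  simp only [Matrix.diagonal_apply_eq] at h1
  have hσc : (σ j : ℂ) ≠ 0 := by exact_mod_cast hσj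
  have h2 : d j * d j = 1 := by
    have : d j * d j * (σ j : ℂ) = 1 * (σ j : ℂ) := by rw [one_mul]; linear_combination h1
    exact mul_right_cancel₀ hσc this
  exact mul_self_eq_one_iff.mp h2
end

section
/- (Forward direction of decoupling theorem) Let X be Hermitian and Y complex symmetric, the blocks of the complex covariance matrix of an n-mode Gaussian state. Suppose there exists a unitary Q such that both Q X Q† and Q Y Qᵀ are real matrices. Then there exist a unitary Z realizing an Autonne–Takagi factorization Y = Z† Y₀ Z* (Y₀ real non-negative diagonal) and a diagonal matrix R with diagonal entries in {1, i} such that R† Z X Z† R is real. -/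
open Matrix in
private lemma star_map_real {n : ℕ} (M : Matrix (Fin n) (Fin n) ℝ) :
    star (M.map (Complex.ofRealHom : ℝ →+* ℂ)) = (star M).map Complex.ofRealHom := by
  ext j k
  simp [Matrix.conjTranspose_apply, Complex.conj_ofReal]

open Matrix in
private lemma map_mem_unitary {n : ℕ} (M : Matrix (Fin n) (Fin n) ℝ)
    (h : M ∈ Matrix.unitaryGroup (Fin n) ℝ) :
    M.map (Complex.ofRealHom : ℝ →+* ℂ) ∈ Matrix.unitaryGroup (Fin n) ℂ := by
  rw [Matrix.mem_unitaryGroup_iff] at h ⊢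
  rw [star_map_real, ← Matrix.map_mul, h]
  simp

open Matrix in
/-- Forward direction of the decoupling theorem: if a passive (unitary) `Q`
makes `Q X Qᴴ` and `Q Y Qᵀ` simultaneously real, then there is an
Autonne–Takagi unitary `Z` for `Y` (`Y = Zᴴ Y₀ Z*`, `Y₀` real non-negative
diagonal) and a diagonal `R` with entries in `{1, i}` such that
`Rᴴ Z X Zᴴ R` is real. -/
theorem decoupling_forward {n : ℕ} (X Y : Matrix (Fin n) (Fin n) ℂ)
    (hX : Xᴴ = X) (hY : Yᵀ = Y)
    (Q : Matrix (Fin n) (Fin n) ℂ) (hQ : Q ∈ Matrix.unitaryGroup (Fin n) ℂ)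
    (hQX : ∀ j k, ((Q * X * Qᴴ) j k).im = 0)
    (hQY : ∀ j k, ((Q * Y * Qᵀ) j k).im = 0) :
    ∃ (Z : Matrix (Fin n) (Fin n) ℂ) (σ : Fin n → ℝ) (r : Fin n → ℂ),
      Z ∈ Matrix.unitaryGroup (Fin n) ℂ ∧
      (∀ j, 0 ≤ σ j) ∧
      Y = Zᴴ * Matrix.diagonal (fun j => (σ j : ℂ)) * (Z.map (starRingEnd ℂ)) ∧
      (∀ j, r j = 1 ∨ r j = Complex.I) ∧
      (∀ j k, (((Matrix.diagonal r)ᴴ * Z * X * Zᴴ * Matrix.diagonal r) j k).im = 0) := by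
  classical
  set f : ℝ →+* ℂ := Complex.ofRealHom with hf
  set Ar : Matrix (Fin n) (Fin n) ℝ := Matrix.of (fun j k => ((Q * Y * Qᵀ) j k).re) with hAr
  set Xr : Matrix (Fin n) (Fin n) ℝ := Matrix.of (fun j k => ((Q * X * Qᴴ) j k).re) with hXr
  have hArmap : Ar.map f = Q * Y * Qᵀ := by
    ext j k
    apply Complex.ext <;> simp [hAr, hf, hQY j k]
  have hXrmap : Xr.map f = Q * X * Qᴴ := by
    ext j k
    apply Complex.ext <;> simp [hXr, hf, hQX j k]
  have hAsym : (Q * Y * Qᵀ)ᵀ = Q * Y * Qᵀ := by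
    rw [Matrix.transpose_mul, Matrix.transpose_mul, Matrix.transpose_transpose, hY,
      Matrix.mul_assoc]
  have hArherm : Ar.IsHermitian := by
    ext j k
    have h := congrFun (congrFun hAsym j) k
    simp only [Matrix.transpose_apply] at h
    simp [Matrix.conjTranspose_apply, hAr, h]
  set U : Matrix (Fin n) (Fin n) ℝ := (hArherm.eigenvectorUnitary : Matrix (Fin n) (Fin n) ℝ)
    with hU
  have hUmem : U ∈ Matrix.unitaryGroup (Fin n) ℝ := hArherm.eigenvectorUnitary.2
  set ev : Fin n → ℝ := hArherm.eigenvalues with hev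
  have hdiagR : star U * Ar * U = Matrix.diagonal ev := by
    simpa [Unitary.conjStarAlgAut_apply] using hArherm.conjStarAlgAut_star_eigenvectorUnitary
  -- complexified orthogonal matrix
  set Oc : Matrix (Fin n) (Fin n) ℂ := (star U).map f with hOc
  have hOcmem : Oc ∈ Matrix.unitaryGroup (Fin n) ℂ :=
    map_mem_unitary _ (Unitary.star_mem hUmem)
  -- phases
  set s : Fin n → ℂ := fun j => if ev j < 0 then Complex.I else 1 with hs
  have hs1 : ∀ j, s j * star (s j) = 1 := by
    intro j
    by_cases h : ev j < 0
    · simp only [hs, if_pos h]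
      rw [Complex.star_def, Complex.conj_I, mul_neg, Complex.I_mul_I, neg_neg]
    · simp [hs, if_neg h]
  have hs1' : ∀ j, star (s j) * s j = 1 := fun j => by rw [mul_comm]; exact hs1 j
  have hDmem : Matrix.diagonal s ∈ Matrix.unitaryGroup (Fin n) ℂ := by
    rw [Matrix.mem_unitaryGroup_iff]
    rw [star_eq_conjTranspose, Matrix.diagonal_conjTranspose, Matrix.diagonal_mul_diagonal]
    rw [show (fun j => s j * star s j) = fun _ => (1 : ℂ) from funext fun j => hs1 j]
    exact Matrix.diagonal_one
  set Z : Matrix (Fin n) (Fin n) ℂ := Matrix.diagonal s * Oc * Q with hZ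
  have hZmem : Z ∈ Matrix.unitaryGroup (Fin n) ℂ := mul_mem (mul_mem hDmem hOcmem) hQ
  set σ : Fin n → ℝ := fun j => |ev j| with hσ
  -- the central diagonalization computation
  have hOcT : Ocᵀ = U.map f := by
    ext j k
    simp [hOc, Matrix.transpose_apply, Matrix.map_apply, Matrix.star_eq_conjTranspose,
      Matrix.conjTranspose_apply]
  have hmid : Oc * (Q * Y * Qᵀ) * Ocᵀ = Matrix.diagonal (fun j => (ev j : ℂ)) := by
    rw [← hArmap, hOcT, hOc, ← Matrix.map_mul, ← Matrix.map_mul, hdiagR]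
    rw [Matrix.diagonal_map (by simp : f 0 = 0)]
    rfl
  have hZYZ : Z * Y * Zᵀ = Matrix.diagonal (fun j => (σ j : ℂ)) := by
    have hZT : Zᵀ = Qᵀ * (Ocᵀ * Matrix.diagonal s) := by
      rw [hZ, Matrix.transpose_mul, Matrix.transpose_mul, Matrix.diagonal_transpose]
    rw [hZT, hZ]
    have key : Matrix.diagonal s * Oc * Q * Y * (Qᵀ * (Ocᵀ * Matrix.diagonal s))
        = Matrix.diagonal s * (Oc * (Q * Y * Qᵀ) * Ocᵀ) * Matrix.diagonal s := by
      simp only [Matrix.mul_assoc]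
    rw [key, hmid, Matrix.diagonal_mul_diagonal, Matrix.diagonal_mul_diagonal]
    refine congrArg Matrix.diagonal (funext fun j => ?_)
    by_cases h : ev j < 0
    · have hI : s j * (ev j : ℂ) * s j = -(ev j : ℂ) := by
        simp only [hs, if_pos h]
        rw [mul_comm Complex.I ((ev j : ℂ)), mul_assoc, Complex.I_mul_I, mul_neg_one]
      rw [hI, hσ]
      simp [abs_of_neg h]
    · simp only [hs, hσ, if_neg h, abs_of_nonneg (not_lt.1 h), one_mul, mul_one]
  -- assemble the answer
  refine ⟨Z, σ, s, hZmem, fun j => abs_nonneg _, ?_, ?_, ?_⟩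
  · -- Takagi factorization
    have h1 : Zᴴ * Z = 1 := by
      have := (Matrix.mem_unitaryGroup_iff').mp hZmem
      rwa [Matrix.star_eq_conjTranspose] at this
    have hmapconj : Z.map (starRingEnd ℂ) = (Zᴴ)ᵀ := by
      ext j k
      simp [Matrix.conjTranspose_apply]
    have h2 : Zᵀ * Z.map (starRingEnd ℂ) = 1 := by
      rw [hmapconj, ← Matrix.transpose_mul, h1, Matrix.transpose_one]
    calc Y = (Zᴴ * Z) * Y * (Zᵀ * Z.map (starRingEnd ℂ)) := by rw [h1, h2]; simp
    _ = Zᴴ * (Z * Y * Zᵀ) * Z.map (starRingEnd ℂ) := by simp only [Matrix.mul_assoc]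
    _ = Zᴴ * Matrix.diagonal (fun j => (σ j : ℂ)) * Z.map (starRingEnd ℂ) := by rw [hZYZ]
  · intro j
    by_cases h : ev j < 0
    · right; simp [hs, h]
    · left; simp [hs, h]
  · -- reality of the decoupled X block
    intro j k
    have hRZ : (Matrix.diagonal s)ᴴ * Z = Oc * Q := by
      rw [hZ, Matrix.diagonal_conjTranspose, ← Matrix.mul_assoc, ← Matrix.mul_assoc,
        Matrix.diagonal_mul_diagonal]
      have hss : (fun i => star s i * s i) = fun _ => (1 : ℂ) := funext fun i => hs1' i
      rw [hss, Matrix.diagonal_one, Matrix.one_mul]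
    have hZR : Zᴴ * Matrix.diagonal s = Qᴴ * Ocᴴ := by
      rw [hZ, Matrix.conjTranspose_mul, Matrix.conjTranspose_mul,
        Matrix.diagonal_conjTranspose, Matrix.mul_assoc, Matrix.mul_assoc,
        Matrix.diagonal_mul_diagonal]
      have hss : (fun i => star s i * s i) = fun _ => (1 : ℂ) := funext fun i => hs1' i
      rw [hss, Matrix.diagonal_one, Matrix.mul_one]
    have hOcH : Ocᴴ = U.map f := by
      rw [← Matrix.star_eq_conjTranspose, hOc, star_map_real, star_star]
    have hfinal : (Matrix.diagonal s)ᴴ * Z * X * Zᴴ * Matrix.diagonal s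
        = (star U * Xr * U).map f := by
      calc (Matrix.diagonal s)ᴴ * Z * X * Zᴴ * Matrix.diagonal s
          = ((Matrix.diagonal s)ᴴ * Z) * X * (Zᴴ * Matrix.diagonal s) := by
            simp only [Matrix.mul_assoc]
      _ = Oc * Q * X * (Qᴴ * Ocᴴ) := by rw [hRZ, hZR]
      _ = Oc * (Q * X * Qᴴ) * Ocᴴ := by simp only [Matrix.mul_assoc]
      _ = Oc * Xr.map f * (U.map f) := by rw [hXrmap, hOcH]
      _ = (star U * Xr * U).map f := by rw [hOc, ← Matrix.map_mul, ← Matrix.map_mul]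
    rw [hfinal]
    simp [Matrix.map_apply, hf]
end

section
/- Combined decoupling theorem: for X Hermitian and Y complex symmetric, there exists a unitary E with E X E† and E Y Eᵀ both real if and only if there exist a unitary Z with Y = Z† Y₀ Z* (Y₀ real non-negative diagonal) and a diagonal R with entries in {1, i} such that R† Z X Z† R is real. -/
open Matrix

private lemma im_zero_mul' {n : ℕ} {M N : Matrix (Fin n) (Fin n) ℂ}
    (hM : ∀ j k, (M j k).im = 0) (hN : ∀ j k, (N j k).im = 0) :
    ∀ j k, ((M * N) j k).im = 0 := by
  intro j k
  rw [Matrix.mul_apply, Complex.im_sum]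
  exact Finset.sum_eq_zero fun i _ => by simp [Complex.mul_im, hM, hN]

open Matrix in
/-- Combined decoupling theorem: for `X` Hermitian and `Y` complex symmetric,
there is a unitary `E` making `E X Eᴴ` and `E Y Eᵀ` simultaneously real iff
there exist an Autonne–Takagi unitary `Z` for `Y` (`Y = Zᴴ Y₀ Z*`, `Y₀` real
non-negative diagonal) and a diagonal `R` with entries in `{1, i}` such that
`Rᴴ Z X Zᴴ R` is real. -/
theorem decoupling_iff {n : ℕ} (X Y : Matrix (Fin n) (Fin n) ℂ)
    (hX : Xᴴ = X) (hY : Yᵀ = Y) :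
    (∃ E : Matrix (Fin n) (Fin n) ℂ,
      E ∈ Matrix.unitaryGroup (Fin n) ℂ ∧
      (∀ j k, ((E * X * Eᴴ) j k).im = 0) ∧
      (∀ j k, ((E * Y * Eᵀ) j k).im = 0)) ↔
    (∃ (Z : Matrix (Fin n) (Fin n) ℂ) (σ : Fin n → ℝ) (r : Fin n → ℂ),
      Z ∈ Matrix.unitaryGroup (Fin n) ℂ ∧
      (∀ j, 0 ≤ σ j) ∧
      Y = Zᴴ * Matrix.diagonal (fun j => (σ j : ℂ)) * (Z.map (starRingEnd ℂ)) ∧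
      (∀ j, r j = 1 ∨ r j = Complex.I) ∧
      (∀ j k, (((Matrix.diagonal r)ᴴ * Z * X * Zᴴ * Matrix.diagonal r) j k).im = 0)) := by
  constructor
  · rintro ⟨E, hE, hXre, hYre⟩
    have hEsE : Eᴴ * E = 1 := by
      have := Matrix.mem_unitaryGroup_iff'.mp hE
      rwa [Matrix.star_eq_conjTranspose] at this
    have hEEs : E * Eᴴ = 1 := by
      have := Matrix.mem_unitaryGroup_iff.mp hE
      rwa [Matrix.star_eq_conjTranspose] at this
    -- the real symmetric matrix B with A = E Y Eᵀ = B (as complex)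
    set A := E * Y * Eᵀ with hAdef
    have hAsymm : Aᵀ = A := by
      rw [hAdef, Matrix.transpose_mul, Matrix.transpose_mul, Matrix.transpose_transpose,
        hY, Matrix.mul_assoc]
    set B : Matrix (Fin n) (Fin n) ℝ := fun j k => (A j k).re with hBdef
    have hAB : A = B.map Complex.ofRealHom := by
      ext j k
      refine Complex.ext ?_ ?_
      · rfl
      · simp [hYre j k]
    have hB : B.IsHermitian := by
      ext j k
      have := congrFun (congrFun hAsymm j) k
      simp only [Matrix.transpose_apply] at this
      simp only [Matrix.conjTranspose_apply, star_trivial, hBdef]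
      show (A k j).re = (A j k).re
      rw [this]
    set U : Matrix (Fin n) (Fin n) ℝ := (hB.eigenvectorUnitary : Matrix (Fin n) (Fin n) ℝ)
      with hUdef
    set μ : Fin n → ℝ := hB.eigenvalues with hμdef
    have hUs : star U = Uᵀ := by
      ext j k; simp [Matrix.star_eq_conjTranspose, Matrix.conjTranspose_apply]
    have hspec : B = U * Matrix.diagonal μ * Uᵀ := by
      rw [← hUs]
      simpa [RCLike.ofReal_real_eq_id] using hB.spectral_theorem
    have hU : U ∈ Matrix.unitaryGroup (Fin n) ℝ := (hB.eigenvectorUnitary).2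
    -- complexified objects
    set O : Matrix (Fin n) (Fin n) ℂ := U.map Complex.ofRealHom with hOdef
    have hOstar : star O = Oᵀ := by
      ext j k
      simp [Matrix.star_eq_conjTranspose, Matrix.conjTranspose_apply, hOdef,
        Complex.conj_ofReal]
    have hO : O ∈ Matrix.unitaryGroup (Fin n) ℂ := by
      rw [Matrix.mem_unitaryGroup_iff, hOstar, hOdef, ← Matrix.transpose_map,
        ← Matrix.map_mul]
      have hUU : U * Uᵀ = 1 := by
        have := Matrix.mem_unitaryGroup_iff.mp hU
        rwa [hUs] at this
      rw [hUU, Matrix.map_one _ (map_zero _) (map_one _)]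
    have hOre : ∀ j k, (O j k).im = 0 := by intro j k; simp [hOdef]
    have hOTre : ∀ j k, (Oᵀ j k).im = 0 := by
      intro j k; simp [Matrix.transpose_apply, hOdef]
    -- spectral theorem over ℂ
    have hspecC : A = O * Matrix.diagonal (fun j => (μ j : ℂ)) * Oᵀ := by
      rw [hAB, hspec, Matrix.map_mul, Matrix.map_mul,
        Matrix.diagonal_map (map_zero _), Matrix.transpose_map]
      rfl
    -- signs and Takagi data
    set c : Fin n → ℝ := fun j => if μ j < 0 then (-1 : ℝ) else 1 with hcdef
    set σ : Fin n → ℝ := fun j => |μ j| with hσdef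
    set r : Fin n → ℂ := fun j => if μ j < 0 then Complex.I else 1 with hrdef
    have hr1 : ∀ j, r j = 1 ∨ r j = Complex.I := by
      intro j; by_cases h : μ j < 0 <;> simp [hrdef, h]
    have hrU : ∀ j, star (r j) * r j = 1 := by
      intro j; by_cases h : μ j < 0 <;> simp [hrdef, h, Complex.conj_I]
    have hr2 : ∀ j, r j * r j = ((c j : ℝ) : ℂ) := by
      intro j; by_cases h : μ j < 0 <;> simp [hrdef, hcdef, h, Complex.I_mul_I]
    have hrs2 : ∀ j, star (r j) * star (r j) = ((c j : ℝ) : ℂ) := by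
      intro j; by_cases h : μ j < 0 <;>
        simp [hrdef, hcdef, h, Complex.conj_I, Complex.I_mul_I]
    have hrσμ : ∀ j, r j * ((σ j : ℝ) : ℂ) * r j = ((μ j : ℝ) : ℂ) := by
      intro j
      by_cases h : μ j < 0
      · simp only [hrdef, hσdef, if_pos h, abs_of_neg h]
        rw [mul_comm, ← mul_assoc, Complex.I_mul_I]
        push_cast
        ring
      · simp [hrdef, hσdef, h, abs_of_nonneg (not_lt.mp h)]
    set R : Matrix (Fin n) (Fin n) ℂ := Matrix.diagonal r with hRdef
    have hRH : Rᴴ = Matrix.diagonal (fun j => star (r j)) := by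
      rw [hRdef, Matrix.diagonal_conjTranspose]; rfl
    have hRmem : R ∈ Matrix.unitaryGroup (Fin n) ℂ := by
      rw [Matrix.mem_unitaryGroup_iff', Matrix.star_eq_conjTranspose, hRH, hRdef,
        Matrix.diagonal_mul_diagonal]
      have : (fun j => star (r j) * r j) = fun _ => (1 : ℂ) := funext hrU
      rw [this, Matrix.diagonal_one]
    set Z : Matrix (Fin n) (Fin n) ℂ := Rᴴ * Oᵀ * E with hZdef
    have hZmem : Z ∈ Matrix.unitaryGroup (Fin n) ℂ := by
      rw [hZdef, ← Matrix.star_eq_conjTranspose, ← hOstar]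
      exact mul_mem (mul_mem (Unitary.star_mem hRmem) (Unitary.star_mem hO)) hE
    have hOTH : (Oᵀ)ᴴ = O := by
      ext j k
      simp [Matrix.conjTranspose_apply, Matrix.transpose_apply, hOdef, Complex.conj_ofReal]
    have hZH : Zᴴ = Eᴴ * O * R := by
      rw [hZdef, Matrix.conjTranspose_mul, Matrix.conjTranspose_mul,
        Matrix.conjTranspose_conjTranspose, hOTH, Matrix.mul_assoc]
    have hRHmap : (Rᴴ).map (starRingEnd ℂ) = R := by
      ext j k
      simp [Matrix.map_apply, hRH, hRdef, Matrix.diagonal_apply]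
      split <;> simp
    have hOTmap : (Oᵀ).map (starRingEnd ℂ) = Oᵀ := by
      ext j k
      simp [Matrix.map_apply, Matrix.transpose_apply, hOdef, Complex.conj_ofReal]
    have hZconj : Z.map (starRingEnd ℂ) = R * Oᵀ * E.map (starRingEnd ℂ) := by
      rw [hZdef, Matrix.map_mul (f := starRingEnd ℂ), Matrix.map_mul (f := starRingEnd ℂ),
        hRHmap, hOTmap]
    have hEtE : Eᵀ * E.map (starRingEnd ℂ) = 1 := by
      have h1 : (Eᴴ * E).map (starRingEnd ℂ) = (1 : Matrix (Fin n) (Fin n) ℂ) := by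
        rw [hEsE, Matrix.map_one _ (map_zero _) (map_one _)]
      rw [Matrix.map_mul (f := starRingEnd ℂ)] at h1
      have h2 : (Eᴴ).map (starRingEnd ℂ) = Eᵀ := by
        ext j k
        simp [Matrix.conjTranspose_apply, Matrix.transpose_apply]
      rwa [h2] at h1
    have hYA : Eᴴ * A * E.map (starRingEnd ℂ) = Y := by
      rw [hAdef]
      simp only [Matrix.mul_assoc]
      rw [hEtE, Matrix.mul_one, ← Matrix.mul_assoc, hEsE, Matrix.one_mul]
    refine ⟨Z, σ, r, hZmem, fun j => abs_nonneg _, ?_, hr1, ?_⟩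
    · -- Takagi factorization
      have hRsR : R * Matrix.diagonal (fun j => ((σ j : ℝ) : ℂ)) * R
          = Matrix.diagonal (fun j => ((μ j : ℝ) : ℂ)) := by
        rw [hRdef, Matrix.diagonal_mul_diagonal, Matrix.diagonal_mul_diagonal]
        exact congrArg Matrix.diagonal (funext fun j => hrσμ j)
      have key : R * (Matrix.diagonal (fun j => ((σ j : ℝ) : ℂ))
            * (R * (Oᵀ * E.map (starRingEnd ℂ))))
          = Matrix.diagonal (fun j => ((μ j : ℝ) : ℂ)) * (Oᵀ * E.map (starRingEnd ℂ)) := by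
        rw [← Matrix.mul_assoc R, ← Matrix.mul_assoc (R * _), hRsR]
      rw [hZH, hZconj, ← hYA, hspecC]
      simp only [Matrix.mul_assoc]
      rw [key]
    · -- realness of Rᴴ Z X Zᴴ R
      have hRR : R * R = Matrix.diagonal (fun j => ((c j : ℝ) : ℂ)) := by
        rw [hRdef, Matrix.diagonal_mul_diagonal]
        exact congrArg Matrix.diagonal (funext fun j => hr2 j)
      have hRHRH : Rᴴ * Rᴴ = Matrix.diagonal (fun j => ((c j : ℝ) : ℂ)) := by
        rw [hRH, Matrix.diagonal_mul_diagonal]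
        exact congrArg Matrix.diagonal (funext fun j => hrs2 j)
      have hfive : Rᴴ * Z * X * Zᴴ * R
          = Matrix.diagonal (fun j => ((c j : ℝ) : ℂ))
            * (Oᵀ * (E * X * Eᴴ * (O * Matrix.diagonal (fun j => ((c j : ℝ) : ℂ))))) := by
        rw [hZH, hZdef]
        simp only [Matrix.mul_assoc]
        rw [hRR, ← Matrix.mul_assoc Rᴴ Rᴴ, hRHRH]
      rw [hfive]
      have hdre : ∀ j k, ((Matrix.diagonal (fun j => ((c j : ℝ) : ℂ))) j k).im = 0 := by
        intro j k
        rw [Matrix.diagonal_apply]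
        split <;> simp
      have hXr : ∀ j k, ((E * X * Eᴴ) j k).im = 0 := hXre
      exact im_zero_mul' hdre (im_zero_mul' hOTre
        (im_zero_mul' hXr (im_zero_mul' hOre hdre)))
  · rintro ⟨Z, σ, r, hZ, hσ, hYfac, hr, hreal⟩
    have hRs : ∀ j, star (r j) * r j = 1 := by
      intro j; rcases hr j with h | h <;> simp [h, Complex.conj_I]
    have hRmem : Matrix.diagonal r ∈ Matrix.unitaryGroup (Fin n) ℂ := by
      rw [Matrix.mem_unitaryGroup_iff', Matrix.star_eq_conjTranspose,
        Matrix.diagonal_conjTranspose, Matrix.diagonal_mul_diagonal]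
      exact (congrArg Matrix.diagonal (funext fun j => hRs j)).trans Matrix.diagonal_one
    have hZZH : Z * Zᴴ = 1 := by
      have := Matrix.mem_unitaryGroup_iff.mp hZ
      rwa [Matrix.star_eq_conjTranspose] at this
    have hZcZt : Z.map (starRingEnd ℂ) * Zᵀ = 1 := by
      have h1 : (Z * Zᴴ).map (starRingEnd ℂ) = (1 : Matrix (Fin n) (Fin n) ℂ) := by
        rw [hZZH, Matrix.map_one _ (map_zero _) (map_one _)]
      rw [Matrix.map_mul (f := starRingEnd ℂ)] at h1
      have h2 : (Zᴴ).map (starRingEnd ℂ) = Zᵀ := by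
        ext j k
        simp [Matrix.conjTranspose_apply, Matrix.transpose_apply]
      rwa [h2] at h1
    refine ⟨(Matrix.diagonal r)ᴴ * Z, ?_, ?_, ?_⟩
    · rw [← Matrix.star_eq_conjTranspose]
      exact mul_mem (Unitary.star_mem hRmem) hZ
    · intro j k
      have heq : (Matrix.diagonal r)ᴴ * Z * X * ((Matrix.diagonal r)ᴴ * Z)ᴴ
          = (Matrix.diagonal r)ᴴ * Z * X * Zᴴ * Matrix.diagonal r := by
        rw [Matrix.conjTranspose_mul, Matrix.conjTranspose_conjTranspose]
        simp only [Matrix.mul_assoc]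
      rw [heq]
      exact hreal j k
    · intro j k
      have h3 : ((Matrix.diagonal r)ᴴ)ᵀ = Matrix.diagonal (fun j => star (r j)) := by
        rw [Matrix.diagonal_conjTranspose, Matrix.diagonal_transpose]
        rfl
      have heq : (Matrix.diagonal r)ᴴ * Z * Y * ((Matrix.diagonal r)ᴴ * Z)ᵀ
          = Matrix.diagonal (fun j => star (r j) * (((σ j : ℝ) : ℂ) * star (r j))) := by
        rw [hYfac, Matrix.transpose_mul, h3]
        simp only [Matrix.mul_assoc]
        rw [← Matrix.mul_assoc Z Zᴴ, hZZH, Matrix.one_mul,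
          ← Matrix.mul_assoc (Z.map (starRingEnd ℂ)) Zᵀ, hZcZt, Matrix.one_mul,
          Matrix.diagonal_conjTranspose, Matrix.diagonal_mul_diagonal,
          Matrix.diagonal_mul_diagonal]
        rfl
      rw [heq]
      rw [Matrix.diagonal_apply]
      split
      · rcases hr j with h | h <;>
          simp [h, Complex.conj_I, Complex.mul_im, Complex.I_mul_I]
      · rfl
end

section
/- Let X be Hermitian and suppose there is a unitary Z such that M := Z X Z† has some entry M_{jk} that is neither real nor purely imaginary, where Z is the (essentially unique) Autonne–Takagi unitary of a complex symmetric Y with distinct nonzero singular values. Then for every diagonal matrix R with entries in {1, i}, the matrix R† M R is not real; consequently no passive operation makes X and Y simultaneously real. -/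
open Matrix Complex

private lemma trans_conj {n : ℕ} (A : Matrix (Fin n) (Fin n) ℂ) :
    (Aᵀ)ᴴ = (Aᴴ)ᵀ := by
  ext j k
  simp [Matrix.conjTranspose_apply]

private lemma map_conj_eq {n : ℕ} (A : Matrix (Fin n) (Fin n) ℂ) :
    A.map (starRingEnd ℂ) = (Aᴴ)ᵀ := by
  ext j k
  simp [Matrix.conjTranspose_apply, Matrix.map_apply]

open Matrix in
/-- Obstruction to decoupling: let `Y` be complex symmetric with Autonne–Takagi
factorisation `Y = Zᴴ Y₀ Z*`, the singular values `σ` being distinct and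
nonzero (so `Z` is unique up to diagonal `±1` signs), and let `X` be Hermitian.
If some entry of `M = Z X Zᴴ` is neither real nor purely imaginary, then for
every diagonal `R` with entries in `{1, i}` the matrix `Rᴴ M R` is not real,
and consequently no passive (unitary) operation makes `X` and `Y`
simultaneously real. -/
theorem decoupling_obstruction {n : ℕ} (X Y Z : Matrix (Fin n) (Fin n) ℂ)
    (σ : Fin n → ℝ)
    (hX : Xᴴ = X) (hY : Yᵀ = Y)
    (hZ : Z ∈ Matrix.unitaryGroup (Fin n) ℂ)
    (hσpos : ∀ j, 0 < σ j)
    (hσdistinct : Function.Injective σ)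
    (hAT : Y = Zᴴ * Matrix.diagonal (fun j => (σ j : ℂ)) * (Z.map (starRingEnd ℂ)))
    (j₀ k₀ : Fin n)
    (hre : ((Z * X * Zᴴ) j₀ k₀).re ≠ 0)
    (him : ((Z * X * Zᴴ) j₀ k₀).im ≠ 0) :
    (∀ r : Fin n → ℂ, (∀ j, r j = 1 ∨ r j = Complex.I) →
      ¬ (∀ j k, (((Matrix.diagonal r)ᴴ * (Z * X * Zᴴ) * Matrix.diagonal r) j k).im = 0)) ∧
    ¬ (∃ E : Matrix (Fin n) (Fin n) ℂ,
        E ∈ Matrix.unitaryGroup (Fin n) ℂ ∧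
        (∀ j k, ((E * X * Eᴴ) j k).im = 0) ∧
        (∀ j k, ((E * Y * Eᵀ) j k).im = 0)) := by
  set M : Matrix (Fin n) (Fin n) ℂ := Z * X * Zᴴ with hM
  -- Part 1
  have part1 : ∀ r : Fin n → ℂ, (∀ j, r j = 1 ∨ r j = Complex.I) →
      ¬ (∀ j k, (((Matrix.diagonal r)ᴴ * M * Matrix.diagonal r) j k).im = 0) := by
    intro r hr hall
    have hentry : ((Matrix.diagonal r)ᴴ * M * Matrix.diagonal r) j₀ k₀
        = star (r j₀) * M j₀ k₀ * r k₀ := by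
      rw [Matrix.diagonal_conjTranspose]
      rw [Matrix.mul_diagonal, Matrix.diagonal_mul]
      simp
    have h0 := hall j₀ k₀
    rw [hentry] at h0
    rcases hr j₀ with h1 | h1 <;> rcases hr k₀ with h2 | h2 <;>
      rw [h1, h2] at h0 <;>
      simp [Complex.star_def, Complex.mul_im, Complex.mul_re] at h0 <;>
      first
        | exact him h0
        | exact hre h0
  refine ⟨part1, ?_⟩
  rintro ⟨E, hE, hXr, hYr⟩
  -- basic unitarity facts
  have hZ1 : star Z * Z = 1 := hZ.1
  have hZ2 : Z * star Z = 1 := hZ.2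
  have hE1 : star E * E = 1 := hE.1
  have hE2 : E * star E = 1 := hE.2
  rw [Matrix.star_eq_conjTranspose] at hZ1 hZ2
  rw [Matrix.star_eq_conjTranspose] at hE1 hE2
  set W : Matrix (Fin n) (Fin n) ℂ := Z * Eᴴ with hWdef
  have hWH : Wᴴ = E * Zᴴ := by
    rw [hWdef, Matrix.conjTranspose_mul, Matrix.conjTranspose_conjTranspose]
  have hWW : W * Wᴴ = 1 := by
    rw [hWH, hWdef, Matrix.mul_assoc, ← Matrix.mul_assoc Eᴴ, hE1, Matrix.one_mul, hZ2]
  have hWW' : Wᴴ * W = 1 := by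
    rw [hWH, hWdef, Matrix.mul_assoc, ← Matrix.mul_assoc Zᴴ, hZ1, Matrix.one_mul, hE2]
  set D : Matrix (Fin n) (Fin n) ℂ := Matrix.diagonal (fun j => (σ j : ℂ)) with hDdef
  -- E Y Eᵀ = Wᴴ D (Wᴴ)ᵀ
  have hY' : E * Y * Eᵀ = Wᴴ * D * (Wᴴ)ᵀ := by
    rw [hAT, map_conj_eq, hWH, Matrix.transpose_mul]
    simp only [Matrix.mul_assoc]
  -- real entries of E Y Eᵀ
  have hYrr : ∀ j k, (starRingEnd ℂ) ((Wᴴ * D * (Wᴴ)ᵀ) j k) = (Wᴴ * D * (Wᴴ)ᵀ) j k := by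
    intro j k
    have := hYr j k
    rw [hY'] at this
    exact Complex.conj_eq_iff_im.mpr this
  -- conj of the matrix
  have hDconj : D.map (starRingEnd ℂ) = D := by
    rw [hDdef, Matrix.diagonal_map (by simp)]
    congr 1
    funext j
    simp
  have hEq1 : Wᵀ * D * W = Wᴴ * D * (Wᴴ)ᵀ := by
    have hconj : (Wᴴ * D * (Wᴴ)ᵀ).map (starRingEnd ℂ) = Wᵀ * D * W := by
      rw [Matrix.map_mul, Matrix.map_mul, hDconj, map_conj_eq, map_conj_eq]
      congr 1
      · congr 1
        · rw [Matrix.conjTranspose_conjTranspose]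
      · ext a b
        simp [Matrix.conjTranspose_apply]
    rw [← hconj]
    ext j k
    exact hYrr j k
  set S : Matrix (Fin n) (Fin n) ℂ := W * Wᵀ with hSdef
  have hSH : Sᴴ = (Wᴴ)ᵀ * Wᴴ := by
    rw [hSdef, Matrix.conjTranspose_mul, trans_conj]
  have hS3 : S * D = D * Sᴴ := by
    have h1 : W * (Wᵀ * D * W) * Wᴴ = S * D := by
      calc W * (Wᵀ * D * W) * Wᴴ = (W * Wᵀ) * D * (W * Wᴴ) := by
            simp only [Matrix.mul_assoc]
        _ = S * D := by rw [hWW, ← hSdef, Matrix.mul_one]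
    have h2 : W * (Wᴴ * D * (Wᴴ)ᵀ) * Wᴴ = D * Sᴴ := by
      calc W * (Wᴴ * D * (Wᴴ)ᵀ) * Wᴴ = (W * Wᴴ) * (D * ((Wᴴ)ᵀ * Wᴴ)) := by
            simp only [Matrix.mul_assoc]
        _ = D * Sᴴ := by rw [hWW, hSH, Matrix.one_mul]
    rw [← h1, ← h2, hEq1]
  have hSsymm : ∀ j k, S k j = S j k := by
    intro j k
    rw [hSdef]
    simp only [Matrix.mul_apply, Matrix.transpose_apply]
    exact Finset.sum_congr rfl fun a _ => mul_comm _ _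
  have hSentry : ∀ j k, S j k * (σ k : ℂ) = (σ j : ℂ) * (starRingEnd ℂ) (S j k) := by
    intro j k
    have h := congrFun (congrFun hS3 j) k
    rw [Matrix.mul_diagonal, Matrix.diagonal_mul] at h
    rw [h, Matrix.conjTranspose_apply, hSsymm j k]
    rfl
  -- off diagonal entries vanish
  have hoff : ∀ j k, j ≠ k → S j k = 0 := by
    intro j k hjk
    have h1 := hSentry j k
    have h2 : (starRingEnd ℂ) (S j k) * (σ k : ℂ) = (σ j : ℂ) * S j k := by
      have := congrArg (starRingEnd ℂ) h1
      simpa using this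
    have h3 : S j k * ((σ k : ℂ) * (σ k : ℂ)) = S j k * ((σ j : ℂ) * (σ j : ℂ)) := by
      calc S j k * ((σ k : ℂ) * (σ k : ℂ)) = (S j k * (σ k : ℂ)) * (σ k : ℂ) := by ring
      _ = (σ j : ℂ) * ((starRingEnd ℂ) (S j k) * (σ k : ℂ)) := by rw [h1]; ring
      _ = (σ j : ℂ) * ((σ j : ℂ) * S j k) := by rw [h2]
      _ = S j k * ((σ j : ℂ) * (σ j : ℂ)) := by ring
    have h4 : S j k * (((σ k : ℂ) - (σ j : ℂ)) * ((σ k : ℂ) + (σ j : ℂ))) = 0 := by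
      have : S j k * ((σ k : ℂ) * (σ k : ℂ)) - S j k * ((σ j : ℂ) * (σ j : ℂ)) = 0 := by
        rw [h3]; ring
      calc S j k * (((σ k : ℂ) - (σ j : ℂ)) * ((σ k : ℂ) + (σ j : ℂ)))
          = S j k * ((σ k : ℂ) * (σ k : ℂ)) - S j k * ((σ j : ℂ) * (σ j : ℂ)) := by ring
      _ = 0 := this
    have hne1 : (σ k : ℂ) - (σ j : ℂ) ≠ 0 := by
      rw [sub_ne_zero]
      exact_mod_cast fun h => hjk (hσdistinct h).symm
    have hne2 : (σ k : ℂ) + (σ j : ℂ) ≠ 0 := by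
      have : (0:ℝ) < σ k + σ j := by have := hσpos k; have := hσpos j; linarith
      exact_mod_cast ne_of_gt this
    rcases mul_eq_zero.mp h4 with h | h
    · exact h
    · exact absurd h (mul_ne_zero hne1 hne2)
  -- diagonal entries are real
  have hdiagreal : ∀ j, (starRingEnd ℂ) (S j j) = S j j := by
    intro j
    have h1 := hSentry j j
    have hσj : (σ j : ℂ) ≠ 0 := by exact_mod_cast ne_of_gt (hσpos j)
    have : (σ j : ℂ) * S j j = (σ j : ℂ) * (starRingEnd ℂ) (S j j) := by
      rw [← h1]; ring
    exact (mul_left_cancel₀ hσj this).symm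
  -- S is diagonal
  have hSdiag : S = Matrix.diagonal (fun j => S j j) := by
    ext j k
    rw [Matrix.diagonal_apply]
    by_cases h : j = k
    · subst h; simp
    · rw [if_neg h]; exact hoff j k h
  -- S has ±1 diagonal entries
  have hSS : S * Sᴴ = 1 := by
    rw [hSdef, hSH, Matrix.mul_assoc, ← Matrix.mul_assoc Wᵀ, ← Matrix.transpose_mul,
      hWW', Matrix.transpose_one, Matrix.one_mul, hWW]
  have hpm : ∀ j, S j j = 1 ∨ S j j = -1 := by
    intro j
    have h := congrFun (congrFun hSS j) j
    rw [hSdiag] at h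
    rw [Matrix.diagonal_conjTranspose, Matrix.diagonal_mul_diagonal] at h
    rw [Matrix.diagonal_apply_eq] at h
    rw [Matrix.one_apply_eq] at h
    have h2 : S j j * (starRingEnd ℂ) (S j j) = 1 := by
      simpa [mul_comm] using h
    rw [hdiagreal] at h2
    exact mul_self_eq_one_iff.mp h2
  -- rows of W are real or purely imaginary
  have hWrow : ∀ a b, W a b = (starRingEnd ℂ) (W a b) * S a a := by
    intro a b
    have hWt : Wᵀ = Wᴴ * S := by
      rw [hSdef, ← Matrix.mul_assoc, hWW', Matrix.one_mul]
    have h := congrFun (congrFun hWt b) a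
    rw [Matrix.transpose_apply] at h
    rw [hSdiag, Matrix.mul_diagonal, Matrix.conjTranspose_apply] at h
    exact h
  -- define r
  set r : Fin n → ℂ := fun a => if S a a = 1 then 1 else Complex.I with hrdef
  have hrmem : ∀ a, r a = 1 ∨ r a = Complex.I := by
    intro a
    by_cases h : S a a = 1
    · left; simp [hrdef, h]
    · right; simp [hrdef, h]
  -- entries of Rᴴ W are real
  have hO : ∀ a b, (star (r a) * W a b).im = 0 := by
    intro a b
    rcases hpm a with h | h
    · have hr1 : r a = 1 := by simp [hrdef, h]
      have hw : W a b = (starRingEnd ℂ) (W a b) := by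
        have := hWrow a b; rw [h, mul_one] at this; exact this
      have : (W a b).im = 0 := by
        have h2 := congrArg Complex.im hw
        simp at h2
        linarith
      rw [hr1]
      simpa using this
    · have hr1 : r a = Complex.I := by
        have : S a a ≠ 1 := by rw [h]; intro hc; exact (by norm_num : (-1:ℂ) ≠ 1) hc
        simp [hrdef, this]
      have hw : W a b = -(starRingEnd ℂ) (W a b) := by
        have h' := hWrow a b; rw [h] at h'; linear_combination h' 
      have hre0 : (W a b).re = 0 := by
        have h2 := congrArg Complex.re hw
        simp at h2
        linarith
      rw [hr1]
      simp [Complex.star_def, Complex.mul_im, hre0]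
  -- the key matrix identity
  set R : Matrix (Fin n) (Fin n) ℂ := Matrix.diagonal r with hRdef
  set O : Matrix (Fin n) (Fin n) ℂ := Rᴴ * W with hOdef
  set X' : Matrix (Fin n) (Fin n) ℂ := E * X * Eᴴ with hX'def
  have hkey : Rᴴ * M * R = O * X' * Oᴴ := by
    have hOH : Oᴴ = Wᴴ * R := by
      rw [hOdef, Matrix.conjTranspose_mul, Matrix.conjTranspose_conjTranspose]
    rw [hOdef, hOH, hX'def, hM, hWdef, hWH]
    simp only [Matrix.mul_assoc]
    rw [← Matrix.mul_assoc Eᴴ E, hE1, Matrix.one_mul]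
    rw [← Matrix.mul_assoc Eᴴ E, hE1, Matrix.one_mul]
  -- entries of O, Oᴴ, X' are real
  have hOre : ∀ a b, (O a b).im = 0 := by
    intro a b
    rw [hOdef, hRdef, Matrix.diagonal_conjTranspose, Matrix.diagonal_mul]
    exact hO a b
  have hfinal : ∀ j k, ((Rᴴ * M * R) j k).im = 0 := by
    intro j k
    rw [hkey]
    rw [Matrix.mul_apply]
    rw [Complex.im_sum]
    refine Finset.sum_eq_zero fun b _ => ?_
    have hOX : ((O * X') j b).im = 0 := by
      rw [Matrix.mul_apply, Complex.im_sum]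
      refine Finset.sum_eq_zero fun a _ => ?_
      rw [Complex.mul_im, hOre j a, hXr a b]
      ring
    have hOH' : ((Oᴴ) b k).im = 0 := by
      rw [Matrix.conjTranspose_apply]
      simp [Complex.star_def, hOre k b]
    rw [Complex.mul_im, hOX, hOH', mul_zero, zero_mul, add_zero]
  exact part1 r hrmem hfinal
end

section
/- Let Y be complex symmetric with Autonne–Takagi factorizations Y = Z₁† Y₀ Z₁* = Z₂† Y₀ Z₂* where Y₀ has distinct positive diagonal entries. If there exists a diagonal R₁ with entries in {1,i} such that R₁† Z₁ X Z₁† R₁ is real, then there also exists a diagonal R₂ with entries in {1,i} such that R₂† Z₂ X Z₂† R₂ is real. (The decoupling criterion does not depend on the choice of Autonne–Takagi unitary.) -/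
open Matrix in
/-- The decoupling criterion is independent of the choice of Autonne–Takagi
unitary: if `Y = Z₁ᴴ Y₀ Z₁* = Z₂ᴴ Y₀ Z₂*` with `Y₀ = diagonal σ` having
distinct strictly positive entries, and some diagonal `R₁` with entries in
`{1, i}` makes `R₁ᴴ Z₁ X Z₁ᴴ R₁` real, then some diagonal `R₂` with entries
in `{1, i}` makes `R₂ᴴ Z₂ X Z₂ᴴ R₂` real. -/
theorem decoupling_criterion_wellDefined {n : ℕ}
    (X Y Z₁ Z₂ : Matrix (Fin n) (Fin n) ℂ) (σ : Fin n → ℝ)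
    (hX : Xᴴ = X) (hY : Yᵀ = Y)
    (hZ₁ : Z₁ ∈ Matrix.unitaryGroup (Fin n) ℂ)
    (hZ₂ : Z₂ ∈ Matrix.unitaryGroup (Fin n) ℂ)
    (hσpos : ∀ j, 0 < σ j)
    (hσdistinct : Function.Injective σ)
    (hAT₁ : Y = Z₁ᴴ * Matrix.diagonal (fun j => (σ j : ℂ)) * (Z₁.map (starRingEnd ℂ)))
    (hAT₂ : Y = Z₂ᴴ * Matrix.diagonal (fun j => (σ j : ℂ)) * (Z₂.map (starRingEnd ℂ)))
    (r₁ : Fin n → ℂ) (hr₁ : ∀ j, r₁ j = 1 ∨ r₁ j = Complex.I)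
    (hreal₁ : ∀ j k,
      (((Matrix.diagonal r₁)ᴴ * Z₁ * X * Z₁ᴴ * Matrix.diagonal r₁) j k).im = 0) :
    ∃ r₂ : Fin n → ℂ, (∀ j, r₂ j = 1 ∨ r₂ j = Complex.I) ∧
      ∀ j k,
        (((Matrix.diagonal r₂)ᴴ * Z₂ * X * Z₂ᴴ * Matrix.diagonal r₂) j k).im = 0 := by
  classical
  set cj := starRingEnd ℂ with hcj
  have hmem₁ := Unitary.mem_iff.mp hZ₁
  have hmem₂ := Unitary.mem_iff.mp hZ₂
  rw [Matrix.star_eq_conjTranspose] at hmem₁ hmem₂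
  obtain ⟨h1l, h1r⟩ := hmem₁
  obtain ⟨h2l, h2r⟩ := hmem₂
  set Sg : Matrix (Fin n) (Fin n) ℂ := Matrix.diagonal (fun j => (σ j : ℂ)) with hSg
  set W := Z₂ * Z₁ᴴ with hW
  have hconj : ∀ A : Matrix (Fin n) (Fin n) ℂ, (Aᴴ).map cj = Aᵀ := by
    intro A; ext i j; simp [conjTranspose_apply, map_apply, cj]
  have hcc1 : Z₁.map cj * Z₁ᵀ = 1 := by
    rw [← hconj Z₁, ← Matrix.map_mul, h1r, Matrix.map_one] <;> simp [cj]
  have hWmap : W.map cj = Z₂.map cj * Z₁ᵀ := by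
    rw [hW, Matrix.map_mul, hconj]
  have key : W * Sg = Sg * W.map cj := by
    have e : Z₁ᴴ * Sg * Z₁.map cj = Z₂ᴴ * Sg * Z₂.map cj := by rw [← hAT₁, ← hAT₂]
    calc W * Sg = Z₂ * (Z₁ᴴ * Sg * Z₁.map cj) * Z₁ᵀ := by
          simp only [hW, Matrix.mul_assoc, hcc1, Matrix.mul_one]
      _ = Z₂ * (Z₂ᴴ * Sg * Z₂.map cj) * Z₁ᵀ := by rw [e]
      _ = (Z₂ * Z₂ᴴ) * (Sg * (Z₂.map cj * Z₁ᵀ)) := by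
          simp only [Matrix.mul_assoc]
      _ = Sg * W.map cj := by rw [h2r, Matrix.one_mul, hWmap]
  have hent : ∀ j k, W j k * (σ k : ℂ) = (σ j : ℂ) * cj (W j k) := by
    intro j k
    have := congrFun (congrFun key j) k
    simpa [hSg, mul_diagonal, diagonal_mul, map_apply] using this
  have hoff : ∀ j k, j ≠ k → W j k = 0 := by
    intro j k hjk
    by_contra h
    have habs := congrArg (fun z : ℂ => ‖z‖) (hent j k)
    simp only [hcj, norm_mul, Complex.norm_conj, Complex.norm_real, Real.norm_eq_abs,
      abs_of_pos (hσpos j), abs_of_pos (hσpos k)] at habs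
    have hne : ‖W j k‖ ≠ 0 := by simpa using h
    rw [mul_comm (σ j) (‖W j k‖)] at habs
    exact hjk (hσdistinct (mul_left_cancel₀ hne habs)).symm
  have hdiagreal : ∀ j, (W j j).im = 0 := by
    intro j
    have h := hent j j
    rw [mul_comm] at h
    have hσne : ((σ j : ℂ)) ≠ 0 := by
      simpa using (hσpos j).ne'
    have : W j j = cj (W j j) := mul_left_cancel₀ hσne h
    have := congrArg Complex.im this
    simp [cj] at this
    linarith
  set w : Fin n → ℝ := fun j => (W j j).re with hw
  have hWd : W = Matrix.diagonal (fun j => (w j : ℂ)) := by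
    ext j k
    by_cases hjk : j = k
    · subst hjk
      rw [diagonal_apply_eq]
      apply Complex.ext <;> simp [hw, hdiagreal j]
    · rw [diagonal_apply_ne _ hjk]
      exact hoff j k hjk
  have hZ₂eq : Z₂ = W * Z₁ := by
    rw [hW, Matrix.mul_assoc, h1l, Matrix.mul_one]
  have hWH : Wᴴ = W := by
    rw [hWd, diagonal_conjTranspose]
    refine congrArg _ (funext fun j => ?_)
    simp [Function.comp, Complex.star_def, Complex.conj_ofReal]
  refine ⟨r₁, hr₁, fun j k => ?_⟩
  have hent2 : ((Matrix.diagonal r₁)ᴴ * Z₂ * X * Z₂ᴴ * Matrix.diagonal r₁) j k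
      = ((w j * w k : ℝ) : ℂ) *
        ((Matrix.diagonal r₁)ᴴ * Z₁ * X * Z₁ᴴ * Matrix.diagonal r₁) j k := by
    have hassoc : ∀ Z : Matrix (Fin n) (Fin n) ℂ,
        (Matrix.diagonal r₁)ᴴ * Z * X * Zᴴ * Matrix.diagonal r₁
        = (Matrix.diagonal r₁)ᴴ * (Z * X * Zᴴ) * Matrix.diagonal r₁ := by
      intro Z; simp only [Matrix.mul_assoc]
    rw [hassoc, hassoc, hZ₂eq, Matrix.conjTranspose_mul, hWH]
    have hmid : W * Z₁ * X * (Z₁ᴴ * W) = W * (Z₁ * X * Z₁ᴴ) * W := by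
      simp only [Matrix.mul_assoc]
    rw [hmid]
    rw [diagonal_conjTranspose, hWd]
    simp only [mul_diagonal, diagonal_mul, Pi.star_apply]
    push_cast
    ring
  rw [hent2]
  have him : ∀ (a : ℝ) (z : ℂ), ((a:ℂ) * z).im = a * z.im := fun a z => by
    simp [Complex.mul_im]
  rw [him, hreal₁ j k, mul_zero]
end

section
/- There exists a 4×4 real symmetric positive-definite matrix 𝒮 satisfying the bona fide condition 𝒮 + (i/2)Ω ≥ 0 (with Ω the standard symplectic form) that has nonzero cross-quadrature correlations which cannot be removed by any symplectic orthogonal (passive) transformation; an example is 𝒮 = ½·[[3, 0.5, 1, 0],[0.5, 0.75, 0.5, 0],[1, 0.5, 2, 0],[0, 0, 0, 1]] in the ordering (q₁, p₁, q₂, p₂). -/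
set_option maxHeartbeats 2000000 in
open Matrix ComplexOrder in
/-- There is a bona fide 4×4 quadrature covariance matrix (real symmetric,
positive definite, satisfying `𝒮 + (i/2)Ω ≥ 0`) with nonzero cross-quadrature
correlations that cannot be removed by any symplectic orthogonal (passive)
transformation; an example (in the ordering `(q₁, p₁, q₂, p₂)`) is
`𝒮 = ½[[3, 0.5, 1, 0],[0.5, 0.75, 0.5, 0],[1, 0.5, 2, 0],[0, 0, 0, 1]]`. -/
theorem locked_in_cross_correlations :
    let Ω : Matrix (Fin 4) (Fin 4) ℝ :=
      !![0, 1, 0, 0; -1, 0, 0, 0; 0, 0, 0, 1; 0, 0, -1, 0]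
    let qidx : Fin 2 → Fin 4 := ![0, 2]
    let pidx : Fin 2 → Fin 4 := ![1, 3]
    ∃ 𝒮 : Matrix (Fin 4) (Fin 4) ℝ,
      𝒮 = (1 / 2 : ℝ) •
        !![3, 0.5, 1, 0; 0.5, 0.75, 0.5, 0; 1, 0.5, 2, 0; 0, 0, 0, 1] ∧
      𝒮ᵀ = 𝒮 ∧
      𝒮.PosDef ∧
      (𝒮.map (fun x => (x : ℂ)) +
        (Complex.I / 2) • Ω.map (fun x => (x : ℂ))).PosSemidef ∧
      (∃ j k : Fin 2, 𝒮 (qidx j) (pidx k) ≠ 0) ∧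
      (∀ O : Matrix (Fin 4) (Fin 4) ℝ,
        O ∈ Matrix.orthogonalGroup (Fin 4) ℝ →
        O * Ω * Oᵀ = Ω →
        ∃ j k : Fin 2, (O * 𝒮 * Oᵀ) (qidx j) (pidx k) ≠ 0) := by
  intro Ωm qidx pidx
  set S : Matrix (Fin 4) (Fin 4) ℝ :=
    (1 / 2 : ℝ) • !![3, 0.5, 1, 0; 0.5, 0.75, 0.5, 0; 1, 0.5, 2, 0; 0, 0, 0, 1] with hSdef
  have hΩval : Ωm = !![0, 1, 0, 0; -1, 0, 0, 0; 0, 0, 0, 1; 0, 0, -1, 0] := rfl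
  have hsymS : Sᵀ = S := by
    ext i j
    fin_cases i <;> fin_cases j <;> simp [hSdef]
  refine ⟨S, rfl, hsymS, ?_, ?_, ?_, ?_⟩
  · -- PosDef
    rw [Matrix.posDef_iff_dotProduct_mulVec]
    constructor
    · ext i j
      fin_cases i <;> fin_cases j <;> simp [hSdef]
    · intro x hx
      have hcase : x 0 ≠ 0 ∨ x 1 ≠ 0 ∨ x 2 ≠ 0 ∨ x 3 ≠ 0 := by
        by_contra hc
        push_neg at hc
        apply hx
        funext i
        fin_cases i <;> simp [hc.1, hc.2.1, hc.2.2.1, hc.2.2.2]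
      simp only [hSdef, dotProduct, Matrix.mulVec, Fin.sum_univ_four, Matrix.smul_apply,
        Pi.star_apply, star_trivial, Matrix.cons_val', Matrix.cons_val_zero, Matrix.cons_val_one,
        Matrix.head_cons, Matrix.cons_val_two, Matrix.cons_val_three, Matrix.tail_cons,
        Matrix.empty_val', Matrix.cons_val_fin_one, Matrix.head_fin_const, Matrix.of_apply,
        smul_eq_mul]
      norm_num
      rcases hcase with h|h|h|h <;>
        nlinarith [mul_self_pos.mpr h, sq_nonneg (x 0 + x 1 / 6 + x 2 / 3),
          sq_nonneg (x 1 + x 2 / 2), sq_nonneg (x 2), sq_nonneg (x 3), sq_nonneg (x 0),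
          sq_nonneg (x 1)]
  · -- complex PosSemidef
    have key : (!![1, 1/6 + Complex.I/3, 1/3, 0;
       1/2, 1/12 + Complex.I/6, 1/6, 0;
       1/2, 1/12 + Complex.I/6, 1/6, 0;
       0, 1/3, 1/3 + Complex.I/3, 0;
       0, 1/6, 1/6 + Complex.I/6, 0;
       0, 1/6, 1/6 + Complex.I/6, 0;
       0, 0, 1/2, Complex.I/2;
       0, 0, 1/2, Complex.I/2] : Matrix (Fin 8) (Fin 4) ℂ)ᴴ *
        !![1, 1/6 + Complex.I/3, 1/3, 0;
       1/2, 1/12 + Complex.I/6, 1/6, 0;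
       1/2, 1/12 + Complex.I/6, 1/6, 0;
       0, 1/3, 1/3 + Complex.I/3, 0;
       0, 1/6, 1/6 + Complex.I/6, 0;
       0, 1/6, 1/6 + Complex.I/6, 0;
       0, 0, 1/2, Complex.I/2;
       0, 0, 1/2, Complex.I/2] =
        S.map (fun x => (x : ℂ)) + (Complex.I / 2) • Ωm.map (fun x => (x : ℂ)) := by
      rw [hΩval]
      ext i j
      fin_cases i <;> fin_cases j <;>
        simp [hSdef, Matrix.mul_apply, Fin.sum_univ_succ, Matrix.cons_val_succ,
          Matrix.conjTranspose_apply, Matrix.vecHead, Matrix.vecTail, Complex.ext_iff] <;>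
        norm_num [Complex.div_re, Complex.div_im, Complex.normSq_apply, map_ofNat]
    rw [← key]
    exact Matrix.posSemidef_conjTranspose_mul_self _
  · -- nonzero cross correlation
    refine ⟨0, 0, ?_⟩
    show S 0 1 ≠ 0
    simp [hSdef]
    norm_num
  · -- locked in
    intro O hO hΩrel
    by_contra hcon
    push_neg at hcon
    set S' : Matrix (Fin 4) (Fin 4) ℝ := O * S * Oᵀ with hS'def
    clear_value S'
    -- orthogonality
    have hO1 : Oᵀ * O = 1 := by
      have h := (Matrix.mem_orthogonalGroup_iff' (Fin 4) ℝ).mp hO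
      exact h
    have r1 : ∀ X : Matrix (Fin 4) (Fin 4) ℝ, Oᵀ * (O * X) = X := fun X => by
      rw [← Matrix.mul_assoc, hO1, one_mul]
    have hΩ2 : Oᵀ * (Ωm * O) = Ωm := by
      conv_lhs => rw [← hΩrel]
      simp only [Matrix.mul_assoc, r1]
      rw [hO1, Matrix.mul_one]
    have r2 : ∀ X : Matrix (Fin 4) (Fin 4) ℝ, Oᵀ * (Ωm * (O * X)) = Ωm * X := fun X => by
      rw [← Matrix.mul_assoc Ωm O X, ← Matrix.mul_assoc, hΩ2]
    -- entry vanishing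
    have h01 : S' 0 1 = 0 := hcon 0 0
    have h03 : S' 0 3 = 0 := hcon 0 1
    have h21 : S' 2 1 = 0 := hcon 1 0
    have h23 : S' 2 3 = 0 := hcon 1 1
    have hsymS' : S'ᵀ = S' := by
      rw [hS'def, Matrix.transpose_mul, Matrix.transpose_mul, Matrix.transpose_transpose,
        hsymS, Matrix.mul_assoc]
    have h10 : S' 1 0 = 0 := by rw [← hsymS']; exact h01
    have h30 : S' 3 0 = 0 := by rw [← hsymS']; exact h03
    have h12 : S' 1 2 = 0 := by rw [← hsymS']; exact h21
    have h32 : S' 3 2 = 0 := by rw [← hsymS']; exact h23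
    -- the sign matrix
    set Dm : Matrix (Fin 4) (Fin 4) ℝ :=
      !![1, 0, 0, 0; 0, -1, 0, 0; 0, 0, 1, 0; 0, 0, 0, -1] with hDmdef
    have hDD : Dm * Dm = 1 := by
      ext i j
      fin_cases i <;> fin_cases j <;>
        simp [hDmdef, Matrix.mul_apply, Fin.sum_univ_four, Matrix.one_apply,
          Matrix.vecHead, Matrix.vecTail]
    have hDΩ : Dm * Ωm * Dm = -Ωm := by
      rw [hΩval]
      ext i j
      fin_cases i <;> fin_cases j <;>
        simp [hDmdef, Matrix.mul_apply, Fin.sum_univ_four, Matrix.vecHead, Matrix.vecTail]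
    have hDS : Dm * S' * Dm = S' := by
      ext i j
      fin_cases i <;> fin_cases j <;>
        simp [hDmdef, Matrix.mul_apply, Matrix.vecMul, dotProduct,
          Fin.sum_univ_four, Matrix.vecHead, Matrix.vecTail,
          h01, h03, h21, h23, h10, h30, h12, h32]
    have hdup : ∀ X : Matrix (Fin 4) (Fin 4) ℝ, Dm * (Dm * X) = X := fun X => by
      rw [← Matrix.mul_assoc, hDD, one_mul]
    have hconj : ∀ A B : Matrix (Fin 4) (Fin 4) ℝ,
        Dm * (A * B) * Dm = (Dm * A * Dm) * (Dm * B * Dm) := fun A B => by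
      simp only [Matrix.mul_assoc, hdup]
    -- trace of W' is zero
    have hDW : Dm * (S' * Ωm * (S' * S') * Ωm * (S' * (S' * S')) * Ωm) * Dm =
        -(S' * Ωm * (S' * S') * Ωm * (S' * (S' * S')) * Ωm) := by
      simp only [hconj, hDS, hDΩ]
      simp only [Matrix.mul_neg, Matrix.neg_mul, neg_neg]
    have htr0 : Matrix.trace (S' * Ωm * (S' * S') * Ωm * (S' * (S' * S')) * Ωm) = 0 := by
      have e : Matrix.trace (Dm * (S' * Ωm * (S' * S') * Ωm * (S' * (S' * S')) * Ωm) * Dm) =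
          Matrix.trace (S' * Ωm * (S' * S') * Ωm * (S' * (S' * S')) * Ωm) := by
        rw [Matrix.trace_mul_comm, ← Matrix.mul_assoc, hDD, one_mul]
      rw [hDW, Matrix.trace_neg] at e
      linarith
    -- trace of W' equals trace of the S-word
    have einv : S' * Ωm * (S' * S') * Ωm * (S' * (S' * S')) * Ωm =
        O * (S * (Ωm * (S * (S * (Ωm * (S * (S * (S * (Oᵀ * Ωm))))))))) := by
      rw [hS'def]
      simp only [Matrix.mul_assoc, r1, r2]
    have htrv : Matrix.trace (S' * Ωm * (S' * S') * Ωm * (S' * (S' * S')) * Ωm) =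
        Matrix.trace (S * (Ωm * (S * (S * (Ωm * (S * (S * (S * Ωm)))))))) := by
      rw [einv, Matrix.trace_mul_comm]
      simp only [Matrix.mul_assoc]
      rw [hΩ2]
    -- numeric evaluation
    have m1 : S * Ωm = !![(-1/4), (3/2), 0, (1/2); (-3/8), (1/4), 0, (1/4); (-1/4), (1/2), 0, 1; 0, 0, (-1/2), 0] := by
      rw [hΩval]
      ext i j
      fin_cases i <;> fin_cases j <;>
        simp [hSdef, Matrix.mul_apply, Fin.sum_univ_four, Matrix.vecHead, Matrix.vecTail] <;> norm_num
    have m2 : S * !![(-1/4), (3/2), 0, (1/2); (-3/8), (1/4), 0, (1/4); (-1/4), (1/2), 0, 1; 0, 0, (-1/2), 0] = !![(-19/32), (41/16), 0, (21/16); (-17/64), (19/32), 0, (15/32); (-15/32), (21/16), 0, (21/16); 0, 0, (-1/4), 0] := by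
      ext i j
      fin_cases i <;> fin_cases j <;>
        simp [hSdef, Matrix.mul_apply, Fin.sum_univ_four, Matrix.vecHead, Matrix.vecTail] <;> norm_num
    have m3 : S * !![(-19/32), (41/16), 0, (21/16); (-17/64), (19/32), 0, (15/32); (-15/32), (21/16), 0, (21/16); 0, 0, (-1/4), 0] = !![(-305/256), (595/128), 0, (351/128); (-187/512), (305/256), 0, (213/256); (-213/256), (351/128), 0, (267/128); 0, 0, (-1/8), 0] := by
      ext i j
      fin_cases i <;> fin_cases j <;>
        simp [hSdef, Matrix.mul_apply, Fin.sum_univ_four, Matrix.vecHead, Matrix.vecTail] <;> norm_num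
    have m4 : Ωm * !![(-305/256), (595/128), 0, (351/128); (-187/512), (305/256), 0, (213/256); (-213/256), (351/128), 0, (267/128); 0, 0, (-1/8), 0] = !![(-187/512), (305/256), 0, (213/256); (305/256), (-595/128), 0, (-351/128); 0, 0, (-1/8), 0; (213/256), (-351/128), 0, (-267/128)] := by
      rw [hΩval]
      ext i j
      fin_cases i <;> fin_cases j <;>
        simp [Matrix.mul_apply, Fin.sum_univ_four, Matrix.vecHead, Matrix.vecTail] <;> norm_num
    have m5 : S * !![(-187/512), (305/256), 0, (213/256); (305/256), (-595/128), 0, (-351/128); 0, 0, (-1/8), 0; (213/256), (-351/128), 0, (-267/128)] = !![(-1/4), (5/8), (-1/16), (9/16); (91/256), (-185/128), (-1/32), (-105/128); (59/512), (-145/256), (-1/8), (-69/256); (213/512), (-351/256), 0, (-267/256)] := by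
      ext i j
      fin_cases i <;> fin_cases j <;>
        simp [hSdef, Matrix.mul_apply, Fin.sum_univ_four, Matrix.vecHead, Matrix.vecTail] <;> norm_num
    have m6 : S * !![(-1/4), (5/8), (-1/16), (9/16); (91/256), (-185/128), (-1/32), (-105/128); (59/512), (-145/256), (-1/8), (-69/256); (213/512), (-351/256), 0, (-267/256)] = !![(-117/512), (75/256), (-21/128), (129/256); (51/512), (-135/256), (-15/256), (-15/64); (81/1024), (-315/512), (-21/128), (-99/512); (213/1024), (-351/512), 0, (-267/512)] := by
      ext i j
      fin_cases i <;> fin_cases j <;>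
        simp [hSdef, Matrix.mul_apply, Fin.sum_univ_four, Matrix.vecHead, Matrix.vecTail] <;> norm_num
    have m7 : Ωm * !![(-117/512), (75/256), (-21/128), (129/256); (51/512), (-135/256), (-15/256), (-15/64); (81/1024), (-315/512), (-21/128), (-99/512); (213/1024), (-351/512), 0, (-267/512)] = !![(51/512), (-135/256), (-15/256), (-15/64); (117/512), (-75/256), (21/128), (-129/256); (213/1024), (-351/512), 0, (-267/512); (-81/1024), (315/512), (21/128), (99/512)] := by
      rw [hΩval]
      ext i j
      fin_cases i <;> fin_cases j <;>
        simp [Matrix.mul_apply, Fin.sum_univ_four, Matrix.vecHead, Matrix.vecTail] <;> norm_num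
    have m8 : S * !![(51/512), (-135/256), (-15/256), (-15/64); (117/512), (-75/256), (21/128), (-129/256); (213/1024), (-351/512), 0, (-267/512); (-81/1024), (315/512), (21/128), (99/512)] = !![(159/512), (-309/256), (-3/64), (-189/256); (333/2048), (-423/1024), (3/64), (-387/1024); (645/2048), (-1047/1024), (3/256), (-783/1024); (-81/2048), (315/1024), (21/256), (99/1024)] := by
      ext i j
      fin_cases i <;> fin_cases j <;>
        simp [hSdef, Matrix.mul_apply, Fin.sum_univ_four, Matrix.vecHead, Matrix.vecTail] <;> norm_num
    have hnum : Matrix.trace (S * (Ωm * (S * (S * (Ωm * (S * (S * (S * Ωm)))))))) = 3/512 := by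
      rw [m1, m2, m3, m4, m5, m6, m7, m8]
      simp [Matrix.trace, Fin.sum_univ_four]
      norm_num
    rw [htrv, hnum] at htr0
    norm_num at htr0
end
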